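/- Let δ ∈ (0,1), σ > 0, and η > 0. Suppose (xₙ) is a sequence of nonnegative reals such that for every n, max_{k³ ≤ j < (k+1)³} xⱼ ≥ η for all large k, and let aₙ = e^{−(1+δ/2)√(2σ²n log log n)}. Then for all sufficiently large n, Σ_{j≥n} aⱼ·xⱼ ≥ η·e^{−(1+δ)²√(2σ²n log log n)}. -/

import Mathlib

set_option maxHeartbeats 1000000


theorem stmt_17 (δ σ η : ℝ) (hδ : 0 < δ) (hδ1 : δ < 1) (hσ : 0 < σ) (hη : 0 < η)
    (x : ℕ → ℝ) (hx : ∀ j, 0 ≤ x j)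
    (hmax : ∃ K : ℕ, ∀ k ≥ K, ∃ j : ℕ, k ^ 3 ≤ j ∧ j < (k + 1) ^ 3 ∧ η ≤ x j)
    (a : ℕ → ℝ)
    (ha : ∀ n : ℕ, a n =
      Real.exp (-(1 + δ / 2) * Real.sqrt (2 * σ ^ 2 * n * Real.log (Real.log n)))) :
    ∃ N : ℕ, ∀ n ≥ N,
      ENNReal.ofReal (η * Real.exp (-(1 + δ) ^ 2 * Real.sqrt (2 * σ ^ 2 * n * Real.log (Real.log n))))
        ≤ ∑' j : ℕ, ENNReal.ofReal (a (n + j) * x (n + j)) := by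
  obtain ⟨K, hK⟩ := hmax
  have hδ2 : (0:ℝ) < 1 + δ/2 := by linarith
  set s : ℝ := (1 + δ)^2 / (1 + δ/2) with hs_def
  have hs1 : 1 < s := by
    rw [hs_def, lt_div_iff₀ hδ2]
    nlinarith
  have hs0 : (0:ℝ) ≤ s := by linarith
  set r : ℝ := s^2 with hr_def
  have hr1 : 1 < r := by nlinarith
  have hr0 : (0:ℝ) ≤ r := by nlinarith
  have hsr1 : 1 < Real.sqrt r := by
    rw [show (1:ℝ) = Real.sqrt 1 by simp]
    exact Real.sqrt_lt_sqrt (by norm_num) hr1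
  set u : ℝ := (Real.sqrt r) ^ ((3:ℝ)⁻¹) with hu_def
  have hu1 : 1 < u := by
    rw [hu_def]
    exact (Real.one_lt_rpow_iff_of_pos (by positivity)).mpr (Or.inl ⟨hsr1, by norm_num⟩)
  have hu3 : u ^ (3:ℕ) = Real.sqrt r := by
    rw [hu_def, ← Real.rpow_natCast ((Real.sqrt r) ^ ((3:ℝ)⁻¹)) 3,
      ← Real.rpow_mul (Real.sqrt_nonneg r)]
    norm_num
  have hc_tend : Filter.Tendsto (fun n : ℕ => (n:ℝ) ^ ((3:ℝ)⁻¹)) Filter.atTop Filter.atTop :=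
    (tendsto_rpow_atTop (by norm_num)).comp tendsto_natCast_atTop_atTop
  have hL_tend : Filter.Tendsto (fun n : ℕ => Real.log (Real.log n)) Filter.atTop Filter.atTop :=
    Real.tendsto_log_atTop.comp (Real.tendsto_log_atTop.comp tendsto_natCast_atTop_atTop)
  have hcond := ((tendsto_natCast_atTop_atTop.eventually_ge_atTop ((K:ℝ)^3)).and
      (hc_tend.eventually_ge_atTop (2/(u-1)))).and
      (((hL_tend.eventually_ge_atTop (Real.log 2 / (Real.sqrt r - 1))).and
      (tendsto_natCast_atTop_atTop.eventually_ge_atTop (Real.sqrt r))).and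
      (Filter.eventually_ge_atTop (3:ℕ)))
  obtain ⟨N, hN⟩ := Filter.eventually_atTop.mp hcond
  refine ⟨N, fun n hn => ?_⟩
  obtain ⟨⟨h1, h2⟩, ⟨h3, h4⟩, h5⟩ := hN n hn
  have hn3 : (3:ℝ) ≤ (n:ℝ) := by exact_mod_cast h5
  have hn0 : (0:ℝ) < (n:ℝ) := by linarith
  have hc0 : (0:ℝ) ≤ (n:ℝ) ^ ((3:ℝ)⁻¹) := Real.rpow_nonneg n.cast_nonneg _
  have hc3 : ((n:ℝ) ^ ((3:ℝ)⁻¹)) ^ (3:ℕ) = (n:ℝ) := by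
    rw [← Real.rpow_natCast ((n:ℝ) ^ ((3:ℝ)⁻¹)) 3, ← Real.rpow_mul n.cast_nonneg]
    norm_num
  set k : ℕ := ⌈(n:ℝ) ^ ((3:ℝ)⁻¹)⌉₊ with hk_def
  have hck : (n:ℝ) ^ ((3:ℝ)⁻¹) ≤ (k:ℝ) := Nat.le_ceil _
  have hk1 : (k:ℝ) < (n:ℝ) ^ ((3:ℝ)⁻¹) + 1 := Nat.ceil_lt_add_one hc0
  have hKk : K ≤ k := by
    have hKc : (K:ℝ) ≤ (n:ℝ) ^ ((3:ℝ)⁻¹) :=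
      le_of_pow_le_pow_left₀ (three_ne_zero) hc0 (by rw [hc3]; exact h1)
    exact_mod_cast hKc.trans hck
  obtain ⟨j, hjk, hjk', hjx⟩ := hK k hKk
  have hnk : n ≤ k ^ 3 := by
    have : (n:ℝ) ≤ (k:ℝ)^(3:ℕ) := by
      rw [← hc3]; exact pow_le_pow_left₀ hc0 hck 3
    exact_mod_cast this
  have hnj : n ≤ j := hnk.trans hjk
  have hnjR : (n:ℝ) ≤ (j:ℝ) := by exact_mod_cast hnj
  have hjr : (j:ℝ) ≤ Real.sqrt r * (n:ℝ) := by
    have hj1 : (j:ℝ) < ((k:ℝ)+1)^3 := by exact_mod_cast hjk'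
    have h2' : (k:ℝ) + 1 ≤ (n:ℝ) ^ ((3:ℝ)⁻¹) + 2 := by linarith
    have h3' : (n:ℝ) ^ ((3:ℝ)⁻¹) + 2 ≤ u * ((n:ℝ) ^ ((3:ℝ)⁻¹)) := by
      have hu0 : (0:ℝ) < u - 1 := by linarith
      have hcu : 2 ≤ (u - 1) * ((n:ℝ) ^ ((3:ℝ)⁻¹)) := by
        calc (2:ℝ) = (u-1) * (2/(u-1)) := by field_simp
        _ ≤ (u-1) * ((n:ℝ) ^ ((3:ℝ)⁻¹)) := by
            exact mul_le_mul_of_nonneg_left h2 hu0.le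
      nlinarith
    calc (j:ℝ) ≤ ((k:ℝ)+1)^3 := le_of_lt hj1
    _ ≤ ((n:ℝ) ^ ((3:ℝ)⁻¹) + 2)^3 := pow_le_pow_left₀ (by positivity) h2' 3
    _ ≤ (u * ((n:ℝ) ^ ((3:ℝ)⁻¹)))^3 := pow_le_pow_left₀ (by positivity) h3' 3
    _ = Real.sqrt r * (n:ℝ) := by rw [mul_pow, hu3, hc3]
  have hj3 : (3:ℝ) ≤ (j:ℝ) := hn3.trans hnjR
  have hexp1 : Real.exp 1 ≤ 3 := by
    have := Real.exp_one_lt_d9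
    linarith
  have hlogn1 : 1 ≤ Real.log n :=
    (Real.le_log_iff_exp_le hn0).mpr (hexp1.trans hn3)
  have hlogj1 : 1 ≤ Real.log j :=
    (Real.le_log_iff_exp_le (by linarith)).mpr (hexp1.trans hj3)
  have hLn0 : 0 ≤ Real.log (Real.log n) := Real.log_nonneg hlogn1
  have hLj0 : 0 ≤ Real.log (Real.log j) := Real.log_nonneg hlogj1
  have hjn2 : (j:ℝ) ≤ (n:ℝ) * (n:ℝ) :=
    hjr.trans (mul_le_mul_of_nonneg_right h4 hn0.le)
  have hlogj2 : Real.log j ≤ 2 * Real.log n := by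
    calc Real.log j ≤ Real.log ((n:ℝ)*(n:ℝ)) := Real.log_le_log (by linarith) hjn2
    _ = 2 * Real.log n := by rw [Real.log_mul (ne_of_gt hn0) (ne_of_gt hn0)]; ring
  have hLj : Real.log (Real.log j) ≤ Real.sqrt r * Real.log (Real.log n) := by
    have hsr0 : (0:ℝ) < Real.sqrt r - 1 := by linarith
    have h3' : Real.log 2 ≤ Real.log (Real.log n) * (Real.sqrt r - 1) := by
      rw [div_le_iff₀ hsr0] at h3; exact h3
    calc Real.log (Real.log j) ≤ Real.log (2 * Real.log n) :=
        Real.log_le_log (by linarith) (by linarith)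
    _ = Real.log 2 + Real.log (Real.log n) := Real.log_mul two_ne_zero (by linarith)
    _ ≤ Real.sqrt r * Real.log (Real.log n) := by nlinarith
  have hkey : (j:ℝ) * Real.log (Real.log j) ≤ r * ((n:ℝ) * Real.log (Real.log n)) := by
    calc (j:ℝ) * Real.log (Real.log j)
        ≤ (Real.sqrt r * (n:ℝ)) * (Real.sqrt r * Real.log (Real.log n)) :=
          mul_le_mul hjr hLj hLj0 (by positivity)
    _ = (Real.sqrt r * Real.sqrt r) * ((n:ℝ) * Real.log (Real.log n)) := by ring
    _ = r * ((n:ℝ) * Real.log (Real.log n)) := by rw [Real.mul_self_sqrt hr0]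
  have hXY : 2 * σ ^ 2 * (j:ℝ) * Real.log (Real.log j)
      ≤ s ^ 2 * (2 * σ ^ 2 * (n:ℝ) * Real.log (Real.log n)) := by
    have h := mul_le_mul_of_nonneg_left hkey (by positivity : (0:ℝ) ≤ 2 * σ ^ 2)
    calc 2 * σ ^ 2 * (j:ℝ) * Real.log (Real.log j)
        = 2 * σ ^ 2 * ((j:ℝ) * Real.log (Real.log j)) := by ring
    _ ≤ 2 * σ ^ 2 * (r * ((n:ℝ) * Real.log (Real.log n))) := h
    _ = s ^ 2 * (2 * σ ^ 2 * (n:ℝ) * Real.log (Real.log n)) := by rw [hr_def]; ring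
  have hsqrt : Real.sqrt (2 * σ ^ 2 * (j:ℝ) * Real.log (Real.log j))
      ≤ s * Real.sqrt (2 * σ ^ 2 * (n:ℝ) * Real.log (Real.log n)) := by
    calc Real.sqrt (2 * σ ^ 2 * (j:ℝ) * Real.log (Real.log j))
        ≤ Real.sqrt (s ^ 2 * (2 * σ ^ 2 * (n:ℝ) * Real.log (Real.log n))) :=
          Real.sqrt_le_sqrt hXY
    _ = s * Real.sqrt (2 * σ ^ 2 * (n:ℝ) * Real.log (Real.log n)) := by
        rw [Real.sqrt_mul (sq_nonneg s), Real.sqrt_sq hs0]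
  have hmain : (1 + δ/2) * Real.sqrt (2 * σ ^ 2 * (j:ℝ) * Real.log (Real.log j))
      ≤ (1 + δ)^2 * Real.sqrt (2 * σ ^ 2 * (n:ℝ) * Real.log (Real.log n)) := by
    have h := mul_le_mul_of_nonneg_left hsqrt hδ2.le
    have heq : (1 + δ/2) * (s * Real.sqrt (2 * σ ^ 2 * (n:ℝ) * Real.log (Real.log n)))
        = (1 + δ)^2 * Real.sqrt (2 * σ ^ 2 * (n:ℝ) * Real.log (Real.log n)) := by
      rw [hs_def]
      field_simp
    linarith
  have haj : Real.exp (-(1 + δ) ^ 2 * Real.sqrt (2 * σ ^ 2 * (n:ℝ) * Real.log (Real.log n)))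
      ≤ a j := by
    rw [ha j]
    exact Real.exp_le_exp.mpr (by nlinarith)
  refine le_trans ?_ (ENNReal.le_tsum (j - n))
  have hjn' : n + (j - n) = j := by omega
  rw [hjn']
  apply ENNReal.ofReal_le_ofReal
  have haj0 : 0 ≤ a j := by rw [ha j]; positivity
  calc η * Real.exp (-(1 + δ) ^ 2 * Real.sqrt (2 * σ ^ 2 * (n:ℝ) * Real.log (Real.log n)))
      ≤ η * a j := mul_le_mul_of_nonneg_left haj hη.le
  _ = a j * η := by ring
  _ ≤ a j * x j := mul_le_mul_of_nonneg_left hjx haj0
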